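/- arXiv:1911.11347 — 7 statements merged into one kernel-verified Lean document; each statement's English description precedes it below -/
import Mathlib

section
/- Let A be a real n×n matrix, B a real n×p matrix, u : ℝ → ℝᵖ, and let ξ, ξ̃ : ℝ → ℝⁿ be differentiable functions satisfying ξ'(t) = Aξ(t) + Bu(t) and ξ̃'(t) = Aξ̃(t) + Bu(t) for all t. Let M be a real symmetric positive definite n×n matrix and μ ∈ ℝ with AᵀM + MA + μM ⪯ 0. Then the function t ↦ (ξ(t) − ξ̃(t))ᵀ M (ξ(t) − ξ̃(t)) e^{μt} is monotone nonincreasing on ℝ. -/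
open Matrix

lemma hasDerivAt_quad {n : ℕ} (M : Matrix (Fin n) (Fin n) ℝ) (f : ℝ → Fin n → ℝ)
    (f' : Fin n → ℝ) (t : ℝ) (hf : HasDerivAt f f' t) :
    HasDerivAt (fun s => f s ⬝ᵥ M.mulVec (f s))
      (f' ⬝ᵥ M.mulVec (f t) + f t ⬝ᵥ M.mulVec f') t := by
  have hc : ∀ i, HasDerivAt (fun s => f s i) (f' i) t := fun i =>
    (hasDerivAt_pi.1 hf) i
  have : HasDerivAt (fun s => ∑ i, ∑ j, f s i * (M i j * f s j))
      (∑ i, ∑ j, (f' i * (M i j * f t j) + f t i * (M i j * f' j))) t := by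
    apply HasDerivAt.fun_sum
    intro i _
    apply HasDerivAt.fun_sum
    intro j _
    exact (hc i).mul ((hc j).const_mul (M i j))
  convert this using 1 <;>
    simp [dotProduct, mulVec, Finset.mul_sum, Finset.sum_add_distrib, mul_assoc,
      mul_comm, mul_left_comm]

/-- Under the LMI AᵀM + MA + μM ⪯ 0, the function
t ↦ (ξ(t) − η(t))ᵀ M (ξ(t) − η(t)) e^{μt} is monotone nonincreasing on ℝ. -/
theorem stmt_3 {n p : ℕ} (A : Matrix (Fin n) (Fin n) ℝ) (B : Matrix (Fin n) (Fin p) ℝ)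
    (u : ℝ → Fin p → ℝ) (ξ η : ℝ → Fin n → ℝ)
    (hξ : ∀ t : ℝ, HasDerivAt ξ (A.mulVec (ξ t) + B.mulVec (u t)) t)
    (hη : ∀ t : ℝ, HasDerivAt η (A.mulVec (η t) + B.mulVec (u t)) t)
    (M : Matrix (Fin n) (Fin n) ℝ) (hMsym : M = Mᵀ)
    (hMpd : ∀ v : Fin n → ℝ, v ≠ 0 → 0 < v ⬝ᵥ M.mulVec v) (μ : ℝ)
    (hLMI : ∀ v : Fin n → ℝ, v ⬝ᵥ (Aᵀ * M + M * A + μ • M).mulVec v ≤ 0) :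
    Antitone (fun t : ℝ => ((ξ t - η t) ⬝ᵥ M.mulVec (ξ t - η t)) * Real.exp (μ * t)) := by
  set e : ℝ → Fin n → ℝ := fun t => ξ t - η t with he
  have hde : ∀ t, HasDerivAt e (A.mulVec (e t)) t := by
    intro t
    have := (hξ t).sub (hη t)
    exact this.congr_deriv (by simp [he, Matrix.mulVec_sub, add_sub_add_comm])
  have key : ∀ t, HasDerivAt (fun s => (e s ⬝ᵥ M.mulVec (e s)) * Real.exp (μ * s))
      ((A.mulVec (e t) ⬝ᵥ M.mulVec (e t) + e t ⬝ᵥ M.mulVec (A.mulVec (e t))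
        + μ * (e t ⬝ᵥ M.mulVec (e t))) * Real.exp (μ * t)) t := by
    intro t
    have h1 := hasDerivAt_quad M e (A.mulVec (e t)) t (hde t)
    have h2 : HasDerivAt (fun s : ℝ => Real.exp (μ * s)) (μ * Real.exp (μ * t)) t := by
      exact ((Real.hasDerivAt_exp (μ * t)).comp t ((hasDerivAt_id t).const_mul μ)).congr_deriv (by simp [mul_comm])
    have := h1.mul h2
    exact this.congr_deriv (by ring)
  apply antitone_of_deriv_nonpos
  · exact fun t => (key t).differentiableAt
  · intro t
    rw [(key t).deriv]
    apply mul_nonpos_of_nonpos_of_nonneg _ (Real.exp_nonneg _)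
    have := hLMI (e t)
    calc A.mulVec (e t) ⬝ᵥ M.mulVec (e t) + e t ⬝ᵥ M.mulVec (A.mulVec (e t))
          + μ * (e t ⬝ᵥ M.mulVec (e t))
        = e t ⬝ᵥ (Aᵀ * M + M * A + μ • M).mulVec (e t) := by
          rw [Matrix.add_mulVec, Matrix.add_mulVec, dotProduct_add, dotProduct_add,
            Matrix.smul_mulVec, dotProduct_smul, ← Matrix.mulVec_mulVec,
            ← Matrix.mulVec_mulVec, Matrix.dotProduct_mulVec (e t) Aᵀ,
            Matrix.vecMul_transpose]
          simp [smul_eq_mul]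
        _ ≤ 0 := this
end

section
/- Let A be a real n×n matrix, B a real n×p matrix, u : ℝ → ℝᵖ, and let ξ, ξ̃ : ℝ → ℝⁿ be differentiable functions satisfying ξ'(t) = Aξ(t) + Bu(t) and ξ̃'(t) = Aξ̃(t) + Bu(t) for all t. Let M be a real symmetric positive definite n×n matrix and μ ∈ ℝ with AᵀM + MA + μM ⪯ 0. If (ξ(0) − ξ̃(0))ᵀ M (ξ(0) − ξ̃(0)) ≤ r for some r ≥ 0, then for all t ≥ 0: (ξ(t) − ξ̃(t))ᵀ M (ξ(t) − ξ̃(t)) ≤ r e^{−μt}. In other words, if the initial state ξ̃(0) lies in the ellipsoid B_M(ξ(0), r) = {x : (x − ξ(0))ᵀM(x − ξ(0)) ≤ r}, then ξ̃(t) ∈ B_M(ξ(t), r e^{−μt}) for all t ≥ 0. -/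
open Matrix

/-- If the initial deviation lies in the ellipsoid of radius r, i.e.
(ξ(0) − η(0))ᵀ M (ξ(0) − η(0)) ≤ r, then for all t ≥ 0 we have
(ξ(t) − η(t))ᵀ M (ξ(t) − η(t)) ≤ r e^{−μt}. -/
theorem stmt_4 {n p : ℕ} (A : Matrix (Fin n) (Fin n) ℝ) (B : Matrix (Fin n) (Fin p) ℝ)
    (u : ℝ → Fin p → ℝ) (ξ η : ℝ → Fin n → ℝ)
    (hξ : ∀ t : ℝ, HasDerivAt ξ (A.mulVec (ξ t) + B.mulVec (u t)) t)
    (hη : ∀ t : ℝ, HasDerivAt η (A.mulVec (η t) + B.mulVec (u t)) t)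
    (M : Matrix (Fin n) (Fin n) ℝ) (hMsym : M = Mᵀ)
    (hMpd : ∀ v : Fin n → ℝ, v ≠ 0 → 0 < v ⬝ᵥ M.mulVec v) (μ : ℝ)
    (hLMI : ∀ v : Fin n → ℝ, v ⬝ᵥ (Aᵀ * M + M * A + μ • M).mulVec v ≤ 0)
    (r : ℝ) (hr : 0 ≤ r)
    (h0 : (ξ 0 - η 0) ⬝ᵥ M.mulVec (ξ 0 - η 0) ≤ r) :
    ∀ t : ℝ, 0 ≤ t →
      (ξ t - η t) ⬝ᵥ M.mulVec (ξ t - η t) ≤ r * Real.exp (-μ * t) := by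
  intro t ht
  set δ : ℝ → Fin n → ℝ := fun s => ξ s - η s with hδdef
  have hδ : ∀ s, HasDerivAt δ (A.mulVec (δ s)) s := by
    intro s
    have h := (hξ s).sub (hη s)
    have : A.mulVec (ξ s) + B.mulVec (u s) - (A.mulVec (η s) + B.mulVec (u s))
        = A.mulVec (δ s) := by
      simp [hδdef, Matrix.mulVec_sub]
    rwa [this] at h
  set V : ℝ → ℝ := fun s => δ s ⬝ᵥ M.mulVec (δ s) with hVdef
  set V' : ℝ → ℝ := fun s =>
    A.mulVec (δ s) ⬝ᵥ M.mulVec (δ s) + δ s ⬝ᵥ M.mulVec (A.mulVec (δ s)) with hV'def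
  have hV : ∀ s, HasDerivAt V (V' s) s := by
    intro s
    have hcomp : ∀ i, HasDerivAt (fun τ => δ τ i) (A.mulVec (δ s) i) s :=
      fun i => (hasDerivAt_pi.mp (hδ s)) i
    have hMδ : ∀ i, HasDerivAt (fun τ => M.mulVec (δ τ) i) (M.mulVec (A.mulVec (δ s)) i) s := by
      intro i
      simp only [Matrix.mulVec, dotProduct]
      exact HasDerivAt.fun_sum fun j _ => (hcomp j).const_mul (M i j)
    have h : HasDerivAt (fun τ => ∑ i, δ τ i * M.mulVec (δ τ) i)
        (∑ i, (A.mulVec (δ s) i * M.mulVec (δ s) i + δ s i * M.mulVec (A.mulVec (δ s)) i)) s :=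
      HasDerivAt.fun_sum fun i _ => (hcomp i).mul (hMδ i)
    have he : (∑ i, (A.mulVec (δ s) i * M.mulVec (δ s) i + δ s i * M.mulVec (A.mulVec (δ s)) i))
        = V' s := by
      simp [hV'def, dotProduct, Finset.sum_add_distrib]
    rw [he] at h
    exact h
  have hkey : ∀ s, V' s + μ * V s ≤ 0 := by
    intro s
    have h := hLMI (δ s)
    have he : δ s ⬝ᵥ (Aᵀ * M + M * A + μ • M).mulVec (δ s) = V' s + μ * V s := by
      simp [hV'def, hVdef, Matrix.add_mulVec, dotProduct_add, ← Matrix.mulVec_mulVec,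
        Matrix.smul_mulVec, dotProduct_smul, smul_eq_mul,
        Matrix.dotProduct_mulVec, Matrix.vecMul_transpose]
    rw [he] at h
    exact h
  set W : ℝ → ℝ := fun s => V s * Real.exp (μ * s) with hWdef
  have hW : ∀ s, HasDerivAt W ((V' s + μ * V s) * Real.exp (μ * s)) s := by
    intro s
    have hexp : HasDerivAt (fun τ : ℝ => Real.exp (μ * τ)) (Real.exp (μ * s) * μ) s := by
      have := ((hasDerivAt_id s).const_mul μ).exp
      simpa using this
    have := (hV s).fun_mul hexp
    refine this.congr_deriv ?_
    ring
  have hanti : Antitone W :=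
    antitone_of_deriv_nonpos (fun s => (hW s).differentiableAt)
      (fun s => by
        rw [(hW s).deriv]
        exact mul_nonpos_of_nonpos_of_nonneg (hkey s) (Real.exp_pos _).le)
  have hW0 : W 0 ≤ r := by
    simpa [hWdef, hVdef, hδdef] using h0
  have hWt : W t ≤ r := le_trans (hanti ht) hW0
  have hVt : V t ≤ r * Real.exp (-μ * t) := by
    have hpos : (0:ℝ) < Real.exp (μ * t) := Real.exp_pos _
    have : V t * Real.exp (μ * t) ≤ r := hWt
    calc V t = (V t * Real.exp (μ * t)) * Real.exp (-μ * t) := by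
          rw [mul_assoc, ← Real.exp_add]; ring_nf; simp
      _ ≤ r * Real.exp (-μ * t) := by
          apply mul_le_mul_of_nonneg_right hWt (Real.exp_pos _).le
  simpa [hVdef, hδdef] using hVt
end

section
/- Let M be a real symmetric positive definite n×n matrix, A a real n×n matrix, and μ ∈ ℝ with AᵀM + MA + μM ⪯ 0. Then for every t ≥ 0 and every v ∈ ℝⁿ: (exp(tA) v)ᵀ M (exp(tA) v) ≤ e^{−μt} vᵀ M v, where exp(tA) is the matrix exponential of tA. -/
open Matrix NormedSpace

private lemma entry_hasDerivAt_stmt5 {n : ℕ} (A : Matrix (Fin n) (Fin n) ℝ) (t : ℝ) (i j : Fin n) :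
    HasDerivAt (fun u : ℝ => NormedSpace.exp (u • A) i j) ((A * NormedSpace.exp (t • A)) i j) t := by
  letI : NormedRing (Matrix (Fin n) (Fin n) ℝ) := Matrix.linftyOpNormedRing
  letI : NormedAlgebra ℝ (Matrix (Fin n) (Fin n) ℝ) := Matrix.linftyOpNormedAlgebra
  exact ((Matrix.entryLinearMap ℝ ℝ i j).toContinuousLinearMap.hasFDerivAt.comp_hasDerivAt t
    (hasDerivAt_exp_smul_const' A t) :)

private lemma coord_hasDerivAt_stmt5 {n : ℕ} (A : Matrix (Fin n) (Fin n) ℝ) (v : Fin n → ℝ)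
    (t : ℝ) (i : Fin n) :
    HasDerivAt (fun u : ℝ => (NormedSpace.exp (u • A)).mulVec v i)
      (A.mulVec ((NormedSpace.exp (t • A)).mulVec v) i) t := by
  have h : HasDerivAt (fun u : ℝ => (NormedSpace.exp (u • A)).mulVec v i)
      ((A * NormedSpace.exp (t • A)).mulVec v i) t := by
    simp only [Matrix.mulVec, dotProduct]
    exact HasDerivAt.fun_sum fun j _ => (entry_hasDerivAt_stmt5 A t i j).mul_const (v j)
  simpa [Matrix.mulVec_mulVec] using h

private lemma phi_hasDerivAt_stmt5 {n : ℕ} (M A : Matrix (Fin n) (Fin n) ℝ) (μ : ℝ)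
    (v : Fin n → ℝ) (t : ℝ) :
    HasDerivAt (fun u : ℝ => Real.exp (μ * u) *
        ((NormedSpace.exp (u • A)).mulVec v ⬝ᵥ M.mulVec ((NormedSpace.exp (u • A)).mulVec v)))
      (Real.exp (μ * t) *
        ((NormedSpace.exp (t • A)).mulVec v ⬝ᵥ
          ((Aᵀ * M + M * A + μ • M).mulVec ((NormedSpace.exp (t • A)).mulVec v)))) t := by
  set g : ℝ → Fin n → ℝ := fun u => (NormedSpace.exp (u • A)).mulVec v with hg
  set w : Fin n → ℝ := A.mulVec (g t) with hw
  have hQ : HasDerivAt (fun u => g u ⬝ᵥ M.mulVec (g u))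
      (w ⬝ᵥ M.mulVec (g t) + g t ⬝ᵥ M.mulVec w) t := by
    have h1 : ∀ i, HasDerivAt (fun u => M.mulVec (g u) i) (M.mulVec w i) t := by
      intro i
      simp only [Matrix.mulVec, dotProduct]
      exact HasDerivAt.fun_sum fun j _ => (coord_hasDerivAt_stmt5 A v t j).const_mul (M i j)
    have h2 : HasDerivAt (fun u => ∑ i, g u i * M.mulVec (g u) i)
        (∑ i, (w i * M.mulVec (g t) i + g t i * M.mulVec w i)) t :=
      HasDerivAt.fun_sum fun i _ => (coord_hasDerivAt_stmt5 A v t i).mul (h1 i)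
    simpa [dotProduct, Finset.sum_add_distrib] using h2
  have hE : HasDerivAt (fun u : ℝ => Real.exp (μ * u)) (Real.exp (μ * t) * μ) t := by
    simpa using ((hasDerivAt_id t).const_mul μ).exp
  have := hE.mul hQ
  refine this.congr_deriv ?_
  have key : g t ⬝ᵥ ((Aᵀ * M + M * A + μ • M).mulVec (g t))
      = w ⬝ᵥ M.mulVec (g t) + g t ⬝ᵥ M.mulVec w + μ * (g t ⬝ᵥ M.mulVec (g t)) := by
    simp only [Matrix.add_mulVec, dotProduct_add, Matrix.smul_mulVec,
      dotProduct_smul, smul_eq_mul, ← Matrix.mulVec_mulVec, hw]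
    rw [Matrix.dotProduct_mulVec (g t) Aᵀ, Matrix.vecMul_transpose]
  rw [key]; ring

/-- Under the LMI AᵀM + MA + μM ⪯ 0, the matrix exponential of tA contracts the
M-quadratic form: (exp(tA) v)ᵀ M (exp(tA) v) ≤ e^{−μt} vᵀ M v for all t ≥ 0. -/
theorem stmt_5 {n : ℕ} (M A : Matrix (Fin n) (Fin n) ℝ) (μ : ℝ)
    (hMsym : M = Mᵀ)
    (hMpd : ∀ v : Fin n → ℝ, v ≠ 0 → 0 < v ⬝ᵥ M.mulVec v)
    (hLMI : ∀ v : Fin n → ℝ, v ⬝ᵥ (Aᵀ * M + M * A + μ • M).mulVec v ≤ 0) :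
    ∀ (t : ℝ), 0 ≤ t → ∀ (v : Fin n → ℝ),
      (NormedSpace.exp (t • A)).mulVec v ⬝ᵥ M.mulVec ((NormedSpace.exp (t • A)).mulVec v)
        ≤ Real.exp (-μ * t) * (v ⬝ᵥ M.mulVec v) := by
  intro t ht v
  set φ : ℝ → ℝ := fun u => Real.exp (μ * u) *
      ((NormedSpace.exp (u • A)).mulVec v ⬝ᵥ M.mulVec ((NormedSpace.exp (u • A)).mulVec v)) with hφ
  have hder : ∀ u, HasDerivAt φ (Real.exp (μ * u) *
      ((NormedSpace.exp (u • A)).mulVec v ⬝ᵥ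
        ((Aᵀ * M + M * A + μ • M).mulVec ((NormedSpace.exp (u • A)).mulVec v)))) u :=
    fun u => phi_hasDerivAt_stmt5 M A μ v u
  have hanti : Antitone φ := by
    refine antitone_of_deriv_nonpos (fun u => (hder u).differentiableAt) fun u => ?_
    rw [(hder u).deriv]
    exact mul_nonpos_of_nonneg_of_nonpos (Real.exp_pos _).le (hLMI _)
  have h0 : φ 0 = v ⬝ᵥ M.mulVec v := by
    simp [hφ, Matrix.one_mulVec]
  have hle : φ t ≤ v ⬝ᵥ M.mulVec v := h0 ▸ hanti ht
  have hEpos : (0:ℝ) < Real.exp (-μ * t) := Real.exp_pos _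
  have := mul_le_mul_of_nonneg_left hle hEpos.le
  calc (NormedSpace.exp (t • A)).mulVec v ⬝ᵥ M.mulVec ((NormedSpace.exp (t • A)).mulVec v)
      = Real.exp (-μ * t) * φ t := by
        rw [hφ]; rw [← mul_assoc, ← Real.exp_add]; ring_nf; simp
    _ ≤ Real.exp (-μ * t) * (v ⬝ᵥ M.mulVec v) := this
end

section
/- Let A be a real n×n matrix, B a real n×p matrix, u : ℝ → ℝᵖ, and let ξ, ξ̃ : ℝ → ℝⁿ be differentiable functions satisfying ξ'(t) = Aξ(t) + Bu(t) and ξ̃'(t) = Aξ̃(t) + Bu(t) for all t. Let M be a real symmetric positive definite n×n matrix and μ ∈ ℝ with AᵀM + MA + μM ⪯ 0, and suppose (ξ(0) − ξ̃(0))ᵀ M (ξ(0) − ξ̃(0)) ≤ r for some r ≥ 0. Let a ∈ ℝⁿ and z > 0 satisfy z² a aᵀ ⪯ M. Then for all t ≥ 0: −(√r) e^{−μt/2} / z ≤ aᵀ(ξ̃(t) − ξ(t)) ≤ (√r) e^{−μt/2} / z. -/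
open Matrix

lemma quad_hasDerivAt {n : ℕ} (M : Matrix (Fin n) (Fin n) ℝ) (δ : ℝ → Fin n → ℝ)
    (d : Fin n → ℝ) (t : ℝ) (h : HasDerivAt δ d t) :
    HasDerivAt (fun s => δ s ⬝ᵥ M.mulVec (δ s)) (d ⬝ᵥ M.mulVec (δ t) + δ t ⬝ᵥ M.mulVec d) t := by
  have hi : ∀ i, HasDerivAt (fun s => δ s i) (d i) t := fun i => (hasDerivAt_pi.mp h) i
  have hMi : ∀ i, HasDerivAt (fun s => (M.mulVec (δ s)) i) ((M.mulVec d) i) t := by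
    intro i
    simp only [Matrix.mulVec, dotProduct]
    exact HasDerivAt.fun_sum fun j _ => (hi j).const_mul (M i j)
  have hsum := HasDerivAt.fun_sum (fun i (_ : i ∈ Finset.univ) => (hi i).fun_mul (hMi i))
  exact hsum.congr_deriv (by simp [dotProduct, Finset.sum_add_distrib])

lemma vv_quad {n : ℕ} (a v : Fin n → ℝ) :
    v ⬝ᵥ (vecMulVec a a).mulVec v = (a ⬝ᵥ v) ^ 2 := by
  simp only [dotProduct, Matrix.mulVec, vecMulVec_apply, sq]
  rw [Finset.sum_mul_sum]
  apply Finset.sum_congr rfl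
  intro i _
  rw [Finset.mul_sum]
  apply Finset.sum_congr rfl
  intro j _
  ring

/-- Combining the ellipsoid decay bound with the rank-one domination z² a aᵀ ⪯ M gives the
linear-functional bound |aᵀ(η(t) − ξ(t))| ≤ √r e^{−μt/2} / z for all t ≥ 0. -/
theorem stmt_7 {n p : ℕ} (A : Matrix (Fin n) (Fin n) ℝ) (B : Matrix (Fin n) (Fin p) ℝ)
    (u : ℝ → Fin p → ℝ) (ξ η : ℝ → Fin n → ℝ)
    (hξ : ∀ t : ℝ, HasDerivAt ξ (A.mulVec (ξ t) + B.mulVec (u t)) t)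
    (hη : ∀ t : ℝ, HasDerivAt η (A.mulVec (η t) + B.mulVec (u t)) t)
    (M : Matrix (Fin n) (Fin n) ℝ) (hMsym : M = Mᵀ)
    (hMpd : ∀ v : Fin n → ℝ, v ≠ 0 → 0 < v ⬝ᵥ M.mulVec v) (μ : ℝ)
    (hLMI : ∀ v : Fin n → ℝ, v ⬝ᵥ (Aᵀ * M + M * A + μ • M).mulVec v ≤ 0)
    (r : ℝ) (hr : 0 ≤ r)
    (h0 : (ξ 0 - η 0) ⬝ᵥ M.mulVec (ξ 0 - η 0) ≤ r)
    (a : Fin n → ℝ) (z : ℝ) (hz : 0 < z)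
    (hdom : ∀ v : Fin n → ℝ, 0 ≤ v ⬝ᵥ (M - z ^ 2 • vecMulVec a a).mulVec v) :
    ∀ t : ℝ, 0 ≤ t →
      -(Real.sqrt r * Real.exp (-μ * t / 2) / z) ≤ a ⬝ᵥ (η t - ξ t) ∧
        a ⬝ᵥ (η t - ξ t) ≤ Real.sqrt r * Real.exp (-μ * t / 2) / z := by
  set δ : ℝ → Fin n → ℝ := fun s => ξ s - η s with hδdef
  have hδ : ∀ s, HasDerivAt δ (A.mulVec (δ s)) s := by
    intro s
    have := (hξ s).sub (hη s)
    rw [add_sub_add_right_eq_sub, ← Matrix.mulVec_sub] at this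
    exact this
  set V : ℝ → ℝ := fun s => δ s ⬝ᵥ M.mulVec (δ s) with hVdef
  have hV : ∀ s, HasDerivAt V
      ((A.mulVec (δ s)) ⬝ᵥ M.mulVec (δ s) + δ s ⬝ᵥ M.mulVec (A.mulVec (δ s))) s :=
    fun s => quad_hasDerivAt M δ _ s (hδ s)
  have key : ∀ x : Fin n → ℝ,
      (A.mulVec x) ⬝ᵥ M.mulVec x + x ⬝ᵥ M.mulVec (A.mulVec x) ≤ -μ * (x ⬝ᵥ M.mulVec x) := by
    intro x
    have h := hLMI x
    have e1 : x ⬝ᵥ (Aᵀ * M).mulVec x = (A.mulVec x) ⬝ᵥ M.mulVec x := by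
      rw [← Matrix.mulVec_mulVec, Matrix.dotProduct_mulVec, Matrix.vecMul_transpose]
    have e2 : x ⬝ᵥ (M * A).mulVec x = x ⬝ᵥ M.mulVec (A.mulVec x) := by
      rw [← Matrix.mulVec_mulVec]
    simp only [Matrix.add_mulVec, dotProduct_add, Matrix.smul_mulVec,
      dotProduct_smul, smul_eq_mul] at h
    rw [e1, e2] at h
    linarith
  -- Gronwall via antitone W = V * exp(μ s)
  set W : ℝ → ℝ := fun s => V s * Real.exp (μ * s) with hWdef
  have hW : ∀ s, HasDerivAt W
      (((A.mulVec (δ s)) ⬝ᵥ M.mulVec (δ s) + δ s ⬝ᵥ M.mulVec (A.mulVec (δ s))) * Real.exp (μ * s)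
        + V s * (μ * Real.exp (μ * s))) s := by
    intro s
    have he : HasDerivAt (fun s : ℝ => Real.exp (μ * s)) (μ * Real.exp (μ * s)) s := by
      have := ((hasDerivAt_id s).const_mul μ).exp
      simpa [mul_comm] using this
    exact (hV s).mul he
  have hWanti : Antitone W := by
    apply antitone_of_deriv_nonpos
    · intro s; exact (hW s).differentiableAt
    · intro s
      rw [(hW s).deriv]
      have h1 := key (δ s)
      have h2 := (Real.exp_pos (μ * s)).le
      nlinarith [mul_le_mul_of_nonneg_right h1 h2]
  have hVbound : ∀ t : ℝ, 0 ≤ t → V t ≤ r * Real.exp (-(μ * t)) := by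
    intro t ht
    have := hWanti ht
    have hW0 : W 0 = V 0 := by simp [hWdef]
    have hV0 : V 0 ≤ r := h0
    have hWt : V t * Real.exp (μ * t) ≤ r := by
      calc V t * Real.exp (μ * t) = W t := rfl
        _ ≤ W 0 := this
        _ = V 0 := hW0
        _ ≤ r := hV0
    have hepos := Real.exp_pos (μ * t)
    rw [Real.exp_neg]
    calc V t = (V t * Real.exp (μ * t)) * (Real.exp (μ * t))⁻¹ := by
          rw [mul_assoc, mul_inv_cancel₀ (Real.exp_ne_zero _), mul_one]
      _ ≤ r * (Real.exp (μ * t))⁻¹ :=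
          mul_le_mul_of_nonneg_right hWt (inv_pos.mpr hepos).le
  intro t ht
  -- from hdom: z^2 (a ⬝ δ)^2 ≤ V t
  have hd := hdom (δ t)
  rw [Matrix.sub_mulVec, dotProduct_sub, Matrix.smul_mulVec,
    dotProduct_smul, smul_eq_mul, vv_quad] at hd
  have hzq : z ^ 2 * (a ⬝ᵥ δ t) ^ 2 ≤ V t := by
    have : (0:ℝ) ≤ δ t ⬝ᵥ M.mulVec (δ t) - z ^ 2 * (a ⬝ᵥ δ t) ^ 2 := hd
    linarith [this]
  have hVt := hVbound t ht
  set b : ℝ := Real.sqrt r * Real.exp (-μ * t / 2) / z with hbdef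
  have hbnn : 0 ≤ b := by positivity
  have hb2 : b ^ 2 = r * Real.exp (-(μ * t)) / z ^ 2 := by
    rw [hbdef, div_pow, mul_pow, Real.sq_sqrt hr, sq (Real.exp _), ← Real.exp_add]
    have : -μ * t / 2 + -μ * t / 2 = -(μ * t) := by ring
    rw [this]
  have hx : a ⬝ᵥ (η t - ξ t) = -(a ⬝ᵥ δ t) := by
    simp [hδdef, dotProduct_sub]
  have hsq : (a ⬝ᵥ (η t - ξ t)) ^ 2 ≤ b ^ 2 := by
    rw [hx, neg_pow, hb2]
    have hz2 : (0:ℝ) < z ^ 2 := by positivity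
    rw [le_div_iff₀ hz2]
    calc (-1 : ℝ) ^ 2 * (a ⬝ᵥ δ t) ^ 2 * z ^ 2 = z ^ 2 * (a ⬝ᵥ δ t) ^ 2 := by ring
      _ ≤ V t := hzq
      _ ≤ r * Real.exp (-(μ * t)) := hVt
  have habs := abs_le_of_sq_le_sq hsq hbnn
  exact abs_le.mp habs
end

section
/- Let A be a real n×n matrix, B a real n×p matrix, u : ℝ → ℝᵖ, and let ξ, ξ̃ : ℝ → ℝⁿ be differentiable functions satisfying ξ'(t) = Aξ(t) + Bu(t) and ξ̃'(t) = Aξ̃(t) + Bu(t) for all t. Let M be a real symmetric positive definite n×n matrix and μ ∈ ℝ with AᵀM + MA + μM ⪯ 0, and suppose (ξ(0) − ξ̃(0))ᵀ M (ξ(0) − ξ̃(0)) ≤ r for some r ≥ 0. Let a ∈ ℝⁿ and z > 0 satisfy z² a aᵀ ⪯ M. Let T > 0, γ ≥ 0, and let s : ℝ → ℝⁿ be any function such that (s(t) − ξ̃(t))ᵀ M (s(t) − ξ̃(t)) e^{μt} ≤ γ for all t ∈ [0, T]. Then for all t ∈ [0, T]: −(√γ + √r) e^{−μt/2} / z ≤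 aᵀ(s(t) − ξ(t)) ≤ (√γ + √r) e^{−μt/2} / z. -/
open Matrix

private lemma hasDerivAt_dot {n : ℕ} {f g : ℝ → Fin n → ℝ} {f' g' : Fin n → ℝ} {t : ℝ}
    (hf : HasDerivAt f f' t) (hg : HasDerivAt g g' t) :
    HasDerivAt (fun t => f t ⬝ᵥ g t) (f' ⬝ᵥ g t + f t ⬝ᵥ g') t := by
  simp only [dotProduct]
  have h := HasDerivAt.fun_sum (u := Finset.univ)
    (fun i _ => ((hasDerivAt_pi.1 hf i).fun_mul (hasDerivAt_pi.1 hg i)))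
  simpa [Finset.sum_add_distrib] using h

private lemma sqrt_exp' (x : ℝ) : Real.sqrt (Real.exp x) = Real.exp (x / 2) := by
  rw [show Real.exp x = (Real.exp (x / 2)) ^ 2 by
    rw [sq, ← Real.exp_add]; ring_nf]
  exact Real.sqrt_sq (Real.exp_nonneg _)

/-- Triangle-type bound: if η starts in the r-ellipsoid around ξ(0) and a realization s stays
within the bisimulation bound γ of η on [0, T], then
|aᵀ(s(t) − ξ(t))| ≤ (√γ + √r) e^{−μt/2} / z on [0, T]. -/
theorem stmt_8 {n p : ℕ} (A : Matrix (Fin n) (Fin n) ℝ) (B : Matrix (Fin n) (Fin p) ℝ)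
    (u : ℝ → Fin p → ℝ) (ξ η : ℝ → Fin n → ℝ)
    (hξ : ∀ t : ℝ, HasDerivAt ξ (A.mulVec (ξ t) + B.mulVec (u t)) t)
    (hη : ∀ t : ℝ, HasDerivAt η (A.mulVec (η t) + B.mulVec (u t)) t)
    (M : Matrix (Fin n) (Fin n) ℝ) (hMsym : M = Mᵀ)
    (hMpd : ∀ v : Fin n → ℝ, v ≠ 0 → 0 < v ⬝ᵥ M.mulVec v) (μ : ℝ)
    (hLMI : ∀ v : Fin n → ℝ, v ⬝ᵥ (Aᵀ * M + M * A + μ • M).mulVec v ≤ 0)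
    (r : ℝ) (hr : 0 ≤ r)
    (h0 : (ξ 0 - η 0) ⬝ᵥ M.mulVec (ξ 0 - η 0) ≤ r)
    (a : Fin n → ℝ) (z : ℝ) (hz : 0 < z)
    (hdom : ∀ v : Fin n → ℝ, 0 ≤ v ⬝ᵥ (M - z ^ 2 • vecMulVec a a).mulVec v)
    (T : ℝ) (hT : 0 < T) (γ : ℝ) (hγ : 0 ≤ γ)
    (s : ℝ → Fin n → ℝ)
    (hs : ∀ t ∈ Set.Icc (0 : ℝ) T,
      ((s t - η t) ⬝ᵥ M.mulVec (s t - η t)) * Real.exp (μ * t) ≤ γ) :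
    ∀ t ∈ Set.Icc (0 : ℝ) T,
      -((Real.sqrt γ + Real.sqrt r) * Real.exp (-μ * t / 2) / z) ≤ a ⬝ᵥ (s t - ξ t) ∧
        a ⬝ᵥ (s t - ξ t) ≤ (Real.sqrt γ + Real.sqrt r) * Real.exp (-μ * t / 2) / z := by
  -- nonnegativity of the quadratic form
  have hMnn : ∀ v : Fin n → ℝ, 0 ≤ v ⬝ᵥ M.mulVec v := by
    intro v
    by_cases hv : v = 0
    · simp [hv]
    · exact (hMpd v hv).le
  -- key pointwise bound: z * |a ⬝ᵥ v| ≤ sqrt (v ⬝ᵥ M v)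
  have key : ∀ v : Fin n → ℝ, z * |a ⬝ᵥ v| ≤ Real.sqrt (v ⬝ᵥ M.mulVec v) := by
    intro v
    have hvm : (vecMulVec a a).mulVec v = (a ⬝ᵥ v) • a := by
      ext i
      simp [vecMulVec, mulVec, dotProduct, Finset.mul_sum, mul_assoc, mul_comm, mul_left_comm]
    have h1 := hdom v
    rw [sub_mulVec, dotProduct_sub, smul_mulVec, dotProduct_smul, hvm,
      dotProduct_smul] at h1
    have h2 : (z * |a ⬝ᵥ v|) ^ 2 = z ^ 2 • ((a ⬝ᵥ v) • (v ⬝ᵥ a)) := by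
      rw [dotProduct_comm]
      simp only [smul_eq_mul, mul_pow, sq_abs]
      ring
    have h3 : (z * |a ⬝ᵥ v|) ^ 2 ≤ v ⬝ᵥ M.mulVec v := by
      rw [h2]; linarith [h1]
    calc z * |a ⬝ᵥ v| = Real.sqrt ((z * |a ⬝ᵥ v|) ^ 2) :=
          (Real.sqrt_sq (by positivity)).symm
      _ ≤ Real.sqrt (v ⬝ᵥ M.mulVec v) := Real.sqrt_le_sqrt h3
  -- the difference g = ξ - η satisfies g' = A g, and its Lyapunov function decays
  set g : ℝ → Fin n → ℝ := fun t => ξ t - η t with hg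
  have hg' : ∀ t, HasDerivAt g (A.mulVec (g t)) t := by
    intro t
    have := (hξ t).fun_sub (hη t)
    simpa [hg, mulVec_sub] using this
  set f : ℝ → ℝ := fun t => (g t ⬝ᵥ M.mulVec (g t)) * Real.exp (μ * t) with hf
  have hfderiv : ∀ t, HasDerivAt f
      ((A.mulVec (g t) ⬝ᵥ M.mulVec (g t) + g t ⬝ᵥ M.mulVec (A.mulVec (g t))
        + μ * (g t ⬝ᵥ M.mulVec (g t))) * Real.exp (μ * t)) t := by
    intro t
    have hMg : HasDerivAt (fun t => M.mulVec (g t)) (M.mulVec (A.mulVec (g t))) t := by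
      apply hasDerivAt_pi.2
      intro i
      have := hasDerivAt_dot (f := fun _ => M i) (f' := 0)
        (hasDerivAt_const t (M i)) (hg' t)
      simpa [mulVec, dotProduct] using this
    have hq : HasDerivAt (fun t => g t ⬝ᵥ M.mulVec (g t))
        (A.mulVec (g t) ⬝ᵥ M.mulVec (g t) + g t ⬝ᵥ M.mulVec (A.mulVec (g t))) t :=
      hasDerivAt_dot (hg' t) hMg
    have hexp : HasDerivAt (fun t => Real.exp (μ * t)) (μ * Real.exp (μ * t)) t := by
      have := ((hasDerivAt_id t).const_mul μ).exp
      simpa [mul_comm] using this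
    have := hq.fun_mul hexp
    refine this.congr_deriv ?_
    ring
  have hfderiv_nonpos : ∀ t, (A.mulVec (g t) ⬝ᵥ M.mulVec (g t)
      + g t ⬝ᵥ M.mulVec (A.mulVec (g t)) + μ * (g t ⬝ᵥ M.mulVec (g t)))
      * Real.exp (μ * t) ≤ 0 := by
    intro t
    have hId : A.mulVec (g t) ⬝ᵥ M.mulVec (g t) + g t ⬝ᵥ M.mulVec (A.mulVec (g t))
        + μ * (g t ⬝ᵥ M.mulVec (g t))
        = g t ⬝ᵥ (Aᵀ * M + M * A + μ • M).mulVec (g t) := by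
      rw [add_mulVec, add_mulVec, dotProduct_add, dotProduct_add,
        smul_mulVec, dotProduct_smul, smul_eq_mul, ← mulVec_mulVec, ← mulVec_mulVec,
        dotProduct_mulVec (g t) Aᵀ (M *ᵥ g t), vecMul_transpose]
    rw [hId]
    exact mul_nonpos_of_nonpos_of_nonneg (hLMI _) (Real.exp_nonneg _)
  have hanti : Antitone f := by
    apply antitone_of_deriv_nonpos
    · exact fun t => (hfderiv t).differentiableAt
    · intro t
      rw [(hfderiv t).deriv]
      exact hfderiv_nonpos t
  -- hence g(t)ᵀ M g(t) e^{μt} ≤ r on [0, T]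
  have hgr : ∀ t ∈ Set.Icc (0 : ℝ) T, (g t ⬝ᵥ M.mulVec (g t)) * Real.exp (μ * t) ≤ r := by
    intro t ht
    have := hanti ht.1
    simp only [hf] at this
    calc (g t ⬝ᵥ M.mulVec (g t)) * Real.exp (μ * t) ≤ (g 0 ⬝ᵥ M.mulVec (g 0)) * Real.exp (μ * 0) := this
      _ = (ξ 0 - η 0) ⬝ᵥ M.mulVec (ξ 0 - η 0) := by simp [hg]
      _ ≤ r := h0
  -- combine: bound on |a ⬝ᵥ v| whenever vᵀMv e^{μt} ≤ c
  have bound : ∀ (v : Fin n → ℝ) (c t : ℝ), 0 ≤ c →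
      (v ⬝ᵥ M.mulVec v) * Real.exp (μ * t) ≤ c →
      |a ⬝ᵥ v| ≤ Real.sqrt c * Real.exp (-μ * t / 2) / z := by
    intro v c t hc hvc
    have hQ : v ⬝ᵥ M.mulVec v ≤ c * Real.exp (-(μ * t)) := by
      rw [Real.exp_neg, ← div_eq_mul_inv, le_div_iff₀ (Real.exp_pos _)]
      exact hvc
    have h1 : z * |a ⬝ᵥ v| ≤ Real.sqrt (c * Real.exp (-(μ * t))) :=
      (key v).trans (Real.sqrt_le_sqrt hQ)
    rw [Real.sqrt_mul hc, sqrt_exp', show -(μ * t) / 2 = -μ * t / 2 by ring] at h1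
    rw [le_div_iff₀ hz]
    calc |a ⬝ᵥ v| * z = z * |a ⬝ᵥ v| := mul_comm _ _
      _ ≤ Real.sqrt c * Real.exp (-μ * t / 2) := h1
  -- final triangle inequality
  intro t ht
  have hb1 : |a ⬝ᵥ (s t - η t)| ≤ Real.sqrt γ * Real.exp (-μ * t / 2) / z :=
    bound _ _ _ hγ (hs t ht)
  have hb2 : |a ⬝ᵥ (ξ t - η t)| ≤ Real.sqrt r * Real.exp (-μ * t / 2) / z :=
    bound _ _ _ hr (hgr t ht)
  have hdec : a ⬝ᵥ (s t - ξ t) = a ⬝ᵥ (s t - η t) - a ⬝ᵥ (ξ t - η t) := by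
    rw [← dotProduct_sub]
    congr 1
    ext i
    simp
  have habs : |a ⬝ᵥ (s t - ξ t)| ≤ (Real.sqrt γ + Real.sqrt r) * Real.exp (-μ * t / 2) / z := by
    rw [hdec]
    calc |a ⬝ᵥ (s t - η t) - a ⬝ᵥ (ξ t - η t)|
        ≤ |a ⬝ᵥ (s t - η t)| + |a ⬝ᵥ (ξ t - η t)| := abs_sub _ _
      _ ≤ Real.sqrt γ * Real.exp (-μ * t / 2) / z + Real.sqrt r * Real.exp (-μ * t / 2) / z :=
          add_le_add hb1 hb2
      _ = (Real.sqrt γ + Real.sqrt r) * Real.exp (-μ * t / 2) / z := by ring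
  exact ⟨neg_le_of_abs_le habs, le_of_abs_le habs⟩
end

section
/- (Deterministic core of Theorem 1, single mode.) Let A be a real n×n matrix, B a real n×p matrix, u : ℝ → ℝᵖ, and let ξ, ξ̃ : ℝ → ℝⁿ be differentiable with ξ'(t) = Aξ(t) + Bu(t) and ξ̃'(t) = Aξ̃(t) + Bu(t) for all t. Let M be a real symmetric positive definite n×n matrix and μ ∈ ℝ with AᵀM + MA + μM ⪯ 0, and suppose (ξ(0) − ξ̃(0))ᵀ M (ξ(0) − ξ̃(0)) ≤ r for some r ≥ 0. Let T > 0, γ ≥ 0, and let s : ℝ → ℝⁿ satisfy (s(t) − ξ̃(t))ᵀ M (s(t) − ξ̃(t)) e^{μt} ≤ γ for all t ∈ [0, T]. Let K be a finite index set and for each k ∈ K let a_k ∈ ℝⁿ, c_k ∈ ℝᵖ, b_k ∈ ℝ, τ_k ∈ [0, T], and z_k > 0 with z_k² a_k a_kᵀ ⪯ M. If for every k ∈ K and every t ∈ [τ_k, T] the nominal trajectory satisfies the tightened constraint a_kᵀ ξ(t) + c_kᵀ u(t) < b_k − (√γ + √r) e^{−μt/2} / z_k, then for every k ∈ K and every t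 ∈ [τ_k, T] the perturbed trajectory satisfies a_kᵀ s(t) + c_kᵀ u(t) < b_k. -/
open Matrix

/-- Deterministic core of Theorem 1 (single mode): if the nominal trajectory ξ satisfies the
tightened constraints a_kᵀ ξ(t) + c_kᵀ u(t) < b_k − (√γ + √r) e^{−μt/2} / z_k on [τ_k, T],
then any realization s staying within the bisimulation bound γ of a perturbed nominal
trajectory η (started in the r-ellipsoid around ξ(0)) satisfies the original constraints
a_kᵀ s(t) + c_kᵀ u(t) < b_k on [τ_k, T]. -/
theorem stmt_9 {n p : ℕ} (A : Matrix (Fin n) (Fin n) ℝ) (B : Matrix (Fin n) (Fin p) ℝ)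
    (u : ℝ → Fin p → ℝ) (ξ η : ℝ → Fin n → ℝ)
    (hξ : ∀ t : ℝ, HasDerivAt ξ (A.mulVec (ξ t) + B.mulVec (u t)) t)
    (hη : ∀ t : ℝ, HasDerivAt η (A.mulVec (η t) + B.mulVec (u t)) t)
    (M : Matrix (Fin n) (Fin n) ℝ) (hMsym : M = Mᵀ)
    (hMpd : ∀ v : Fin n → ℝ, v ≠ 0 → 0 < v ⬝ᵥ M.mulVec v) (μ : ℝ)
    (hLMI : ∀ v : Fin n → ℝ, v ⬝ᵥ (Aᵀ * M + M * A + μ • M).mulVec v ≤ 0)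
    (r : ℝ) (hr : 0 ≤ r)
    (h0 : (ξ 0 - η 0) ⬝ᵥ M.mulVec (ξ 0 - η 0) ≤ r)
    (T : ℝ) (hT : 0 < T) (γ : ℝ) (hγ : 0 ≤ γ)
    (s : ℝ → Fin n → ℝ)
    (hs : ∀ t ∈ Set.Icc (0 : ℝ) T,
      ((s t - η t) ⬝ᵥ M.mulVec (s t - η t)) * Real.exp (μ * t) ≤ γ)
    (K : Type*) [Fintype K]
    (a : K → Fin n → ℝ) (c : K → Fin p → ℝ) (b : K → ℝ) (τ : K → ℝ) (z : K → ℝ)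
    (hτ : ∀ k, τ k ∈ Set.Icc (0 : ℝ) T) (hz : ∀ k, 0 < z k)
    (hdom : ∀ (k : K) (v : Fin n → ℝ),
      0 ≤ v ⬝ᵥ (M - (z k) ^ 2 • vecMulVec (a k) (a k)).mulVec v)
    (hnom : ∀ (k : K), ∀ t ∈ Set.Icc (τ k) T,
      a k ⬝ᵥ ξ t + c k ⬝ᵥ u t
        < b k - (Real.sqrt γ + Real.sqrt r) * Real.exp (-μ * t / 2) / z k) :
    ∀ (k : K), ∀ t ∈ Set.Icc (τ k) T, a k ⬝ᵥ s t + c k ⬝ᵥ u t < b k := by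
  intro k t ht
  obtain ⟨hτ0, hτT⟩ := hτ k
  have ht0 : (0 : ℝ) ≤ t := le_trans hτ0 ht.1
  have htT : t ≤ T := ht.2
  set e : ℝ → Fin n → ℝ := fun t => ξ t - η t with hedef
  -- derivative of the error
  have he' : ∀ t₀ : ℝ, HasDerivAt e (A.mulVec (e t₀)) t₀ := by
    intro t₀
    have h := (hξ t₀).sub (hη t₀)
    have : A.mulVec (ξ t₀) + B.mulVec (u t₀) - (A.mulVec (η t₀) + B.mulVec (u t₀))
        = A.mulVec (e t₀) := by
      simp only [hedef, Matrix.mulVec_sub]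
      abel
    rwa [this] at h
  have hecomp : ∀ (i : Fin n) (t₀ : ℝ),
      HasDerivAt (fun t => e t i) ((A.mulVec (e t₀)) i) t₀ :=
    fun i t₀ => hasDerivAt_pi.mp (he' t₀) i
  -- quadratic form expansion
  have quadForm : ∀ v : Fin n → ℝ,
      v ⬝ᵥ M.mulVec v = ∑ i, ∑ j, M i j * (v i * v j) := by
    intro v
    simp only [dotProduct, Matrix.mulVec, Finset.mul_sum]
    exact Finset.sum_congr rfl fun i _ => Finset.sum_congr rfl fun j _ => by ring
  have expand : ∀ v w : Fin n → ℝ,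
      w ⬝ᵥ M.mulVec v + v ⬝ᵥ M.mulVec w
        = ∑ i, ∑ j, M i j * (w i * v j + v i * w j) := by
    intro v w
    simp only [dotProduct, Matrix.mulVec, Finset.mul_sum, ← Finset.sum_add_distrib]
    exact Finset.sum_congr rfl fun i _ => Finset.sum_congr rfl fun j _ => by ring
  -- derivative of the quadratic form
  have hg : ∀ t₀ : ℝ, HasDerivAt (fun t => e t ⬝ᵥ M.mulVec (e t))
      ((A.mulVec (e t₀)) ⬝ᵥ M.mulVec (e t₀) + e t₀ ⬝ᵥ M.mulVec (A.mulVec (e t₀))) t₀ := by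
    intro t₀
    have h1 : HasDerivAt (fun t => ∑ i, ∑ j, M i j * (e t i * e t j))
        (∑ i, ∑ j, M i j * ((A.mulVec (e t₀)) i * e t₀ j + e t₀ i * (A.mulVec (e t₀)) j))
        t₀ := by
      apply HasDerivAt.fun_sum; intro i _
      apply HasDerivAt.fun_sum; intro j _
      exact ((hecomp i t₀).mul (hecomp j t₀)).const_mul _
    have hfun : (fun t => ∑ i, ∑ j, M i j * (e t i * e t j))
        = fun t => e t ⬝ᵥ M.mulVec (e t) := funext fun t => (quadForm (e t)).symm
    rw [expand (e t₀) (A.mulVec (e t₀))]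
    exact hfun ▸ h1
  -- key algebraic identity for the LMI
  have key : ∀ v : Fin n → ℝ,
      (A.mulVec v) ⬝ᵥ M.mulVec v + v ⬝ᵥ M.mulVec (A.mulVec v) + μ * (v ⬝ᵥ M.mulVec v)
        = v ⬝ᵥ ((Aᵀ * M + M * A + μ • M).mulVec v) := by
    intro v
    rw [Matrix.add_mulVec, Matrix.add_mulVec, dotProduct_add, dotProduct_add,
      ← Matrix.mulVec_mulVec, ← Matrix.mulVec_mulVec, Matrix.smul_mulVec,
      dotProduct_smul, smul_eq_mul]
    congr 1
    congr 1
    rw [Matrix.dotProduct_mulVec v Aᵀ, Matrix.vecMul_transpose]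
  -- Lyapunov function
  set V : ℝ → ℝ := fun t => (e t ⬝ᵥ M.mulVec (e t)) * Real.exp (μ * t) with hVdef
  have hV : ∀ t₀ : ℝ, HasDerivAt V
      ((e t₀ ⬝ᵥ ((Aᵀ * M + M * A + μ • M).mulVec (e t₀))) * Real.exp (μ * t₀)) t₀ := by
    intro t₀
    have hexp : HasDerivAt (fun t => Real.exp (μ * t)) (Real.exp (μ * t₀) * μ) t₀ := by
      have h1 : HasDerivAt (fun t : ℝ => μ * t) μ t₀ := by
        simpa using (hasDerivAt_id t₀).const_mul μ
      exact h1.exp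
    have := (hg t₀).mul hexp
    refine this.congr_deriv ?_
    rw [← key (e t₀)]
    ring
  have hderiv : ∀ t₀ : ℝ, deriv V t₀ ≤ 0 := by
    intro t₀
    rw [(hV t₀).deriv]
    exact mul_nonpos_of_nonpos_of_nonneg (hLMI (e t₀)) (Real.exp_nonneg _)
  have hanti : Antitone V :=
    antitone_of_deriv_nonpos (fun t₀ => (hV t₀).differentiableAt) hderiv
  have hVt : V t ≤ r := by
    have := hanti ht0
    have hV0 : V 0 = (ξ 0 - η 0) ⬝ᵥ M.mulVec (ξ 0 - η 0) := by
      simp [hVdef, hedef]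
    linarith [hV0 ▸ this]
  -- the ellipsoidal bound on aᵀw
  have bound : ∀ (w : Fin n → ℝ) (ρ : ℝ), 0 ≤ ρ →
      (w ⬝ᵥ M.mulVec w) * Real.exp (μ * t) ≤ ρ →
      a k ⬝ᵥ w ≤ Real.sqrt ρ * Real.exp (-μ * t / 2) / z k := by
    intro w ρ hρ hw
    have hvv : (vecMulVec (a k) (a k)).mulVec w = (a k ⬝ᵥ w) • a k := by
      ext i
      simp only [Matrix.mulVec, dotProduct, Matrix.vecMulVec_apply, Pi.smul_apply,
        smul_eq_mul, Finset.sum_mul]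
      exact Finset.sum_congr rfl fun j _ => by ring
    have hq : (z k) ^ 2 * (a k ⬝ᵥ w) ^ 2 ≤ w ⬝ᵥ M.mulVec w := by
      have h := hdom k w
      rw [Matrix.sub_mulVec, dotProduct_sub, Matrix.smul_mulVec, dotProduct_smul,
        smul_eq_mul, hvv, dotProduct_smul, smul_eq_mul] at h
      have hcomm : w ⬝ᵥ a k = a k ⬝ᵥ w := dotProduct_comm _ _
      rw [hcomm, ← sq] at h
      linarith
    have hwMw : w ⬝ᵥ M.mulVec w ≤ ρ * Real.exp (-(μ * t)) := by
      have hepos : (0 : ℝ) < Real.exp (μ * t) := Real.exp_pos _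
      rw [Real.exp_neg, ← div_eq_mul_inv, le_div_iff₀ hepos]
      exact hw
    have hsq : (z k * (a k ⬝ᵥ w)) ^ 2 ≤ ρ * Real.exp (-(μ * t)) := by
      calc (z k * (a k ⬝ᵥ w)) ^ 2 = (z k) ^ 2 * (a k ⬝ᵥ w) ^ 2 := by ring
        _ ≤ w ⬝ᵥ M.mulVec w := hq
        _ ≤ ρ * Real.exp (-(μ * t)) := hwMw
    have habs : |z k * (a k ⬝ᵥ w)| ≤ Real.sqrt (ρ * Real.exp (-(μ * t))) :=
      Real.abs_le_sqrt hsq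
    have hsqrt : Real.sqrt (ρ * Real.exp (-(μ * t)))
        = Real.sqrt ρ * Real.exp (-μ * t / 2) := by
      rw [Real.sqrt_mul hρ]
      congr 1
      have : Real.exp (-(μ * t)) = Real.exp (-μ * t / 2) ^ 2 := by
        rw [← Real.exp_nat_mul]
        congr 1
        push_cast
        ring
      rw [this, Real.sqrt_sq (Real.exp_nonneg _)]
    have hle : z k * (a k ⬝ᵥ w) ≤ Real.sqrt ρ * Real.exp (-μ * t / 2) := by
      calc z k * (a k ⬝ᵥ w) ≤ |z k * (a k ⬝ᵥ w)| := le_abs_self _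
        _ ≤ _ := hsqrt ▸ habs
    rw [div_eq_mul_inv, ← mul_le_mul_iff_right₀ (hz k)]
    calc z k * (a k ⬝ᵥ w) ≤ Real.sqrt ρ * Real.exp (-μ * t / 2) := hle
      _ = z k * (Real.sqrt ρ * Real.exp (-μ * t / 2) * (z k)⁻¹) := by
          field_simp [(hz k).ne']
  -- apply the bound to s − η and η − ξ
  have hb1 : a k ⬝ᵥ (s t - η t) ≤ Real.sqrt γ * Real.exp (-μ * t / 2) / z k :=
    bound _ γ hγ (hs t ⟨ht0, htT⟩)
  have hb2 : a k ⬝ᵥ (η t - ξ t) ≤ Real.sqrt r * Real.exp (-μ * t / 2) / z k := by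
    apply bound _ r hr
    have hne : η t - ξ t = -(e t) := by simp [hedef]
    rw [hne]
    have : (-(e t)) ⬝ᵥ M.mulVec (-(e t)) = e t ⬝ᵥ M.mulVec (e t) := by
      rw [Matrix.mulVec_neg, neg_dotProduct, dotProduct_neg, neg_neg]
    rw [this]
    exact hVt
  have hsplit : a k ⬝ᵥ s t = a k ⬝ᵥ ξ t + a k ⬝ᵥ (s t - η t) + a k ⬝ᵥ (η t - ξ t) := by
    rw [dotProduct_sub, dotProduct_sub]
    ring
  have hn := hnom k t ht
  have hcomb : (Real.sqrt γ + Real.sqrt r) * Real.exp (-μ * t / 2) / z k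
      = Real.sqrt γ * Real.exp (-μ * t / 2) / z k
        + Real.sqrt r * Real.exp (-μ * t / 2) / z k := by
    ring
  rw [hsplit]
  linarith [hb1, hb2, hn, hcomb]
end

section
/- (Deterministic mode-switching propagation in Theorem 1.) Let A₀, A₁ be real n×n matrices, B₀, B₁ real n×p matrices, u : ℝ → ℝᵖ, and let T₀ > 0 and T ≥ T₀. Let ξ, ξ̃ : ℝ → ℝⁿ be continuous functions that are differentiable on [0, T₀] with ξ'(t) = A₀ξ(t) + B₀u(t) and ξ̃'(t) = A₀ξ̃(t) + B₀u(t) there, and differentiable on [T₀, T] with ξ'(t) = A₁ξ(t) + B₁u(t) and ξ̃'(t) = A₁ξ̃(t) + B₁u(t) there. Let M₀, M₁ be real symmetric positive definite n×n matrices and μ₀, μ₁ ∈ ℝ with A₀ᵀM₀ + M₀A₀ + μ₀M₀ ⪯ 0 and A₁ᵀM₁ + M₁A₁ + μ₁M₁ ⪯ 0. Suppose (ξ(0) − ξ̃(0))ᵀ M₀ (ξ(0) − ξ̃(0)) ≤ r₀ and that the ellipsoid containment ∀ v ∈ ℝⁿ, vᵀM₀v ≤ r₀ e^{−μ₀T₀}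 ⟹ vᵀM₁v ≤ r₁ holds. Then for all t ∈ [0, T₀]: (ξ(t) − ξ̃(t))ᵀ M₀ (ξ(t) − ξ̃(t)) ≤ r₀ e^{−μ₀ t}, and for all t ∈ [T₀, T]: (ξ(t) − ξ̃(t))ᵀ M₁ (ξ(t) − ξ̃(t)) ≤ r₁ e^{−μ₁ (t − T₀)}. -/
open Matrix

private lemma quad_deriv {n : ℕ} (M : Matrix (Fin n) (Fin n) ℝ) {x : ℝ → Fin n → ℝ}
    {x' : Fin n → ℝ} {s : Set ℝ} {t : ℝ} (hx : HasDerivWithinAt x x' s t) :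
    HasDerivWithinAt (fun τ => x τ ⬝ᵥ M.mulVec (x τ))
      (x' ⬝ᵥ M.mulVec (x t) + x t ⬝ᵥ M.mulVec x') s t := by
  have hxi : ∀ i, HasDerivWithinAt (fun τ => x τ i) (x' i) s t :=
    hasDerivWithinAt_pi.1 hx
  have hsum : HasDerivWithinAt (fun τ => ∑ i, ∑ j, x τ i * (M i j * x τ j))
      (∑ i, ∑ j, (x' i * (M i j * x t j) + x t i * (M i j * x' j))) s t := by
    refine HasDerivWithinAt.fun_sum fun i _ => HasDerivWithinAt.fun_sum fun j _ => ?_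
    simpa [mul_comm, mul_left_comm] using (hxi i).fun_mul ((hxi j).const_mul (M i j))
  have e1 : ∀ v w : Fin n → ℝ, v ⬝ᵥ M.mulVec w = ∑ i, ∑ j, v i * (M i j * w j) := by
    intro v w
    simp [dotProduct, Matrix.mulVec, Finset.mul_sum]
  have e2 : (fun τ => x τ ⬝ᵥ M.mulVec (x τ)) = fun τ => ∑ i, ∑ j, x τ i * (M i j * x τ j) := by
    funext τ; exact e1 _ _
  rw [e2, e1, e1]
  simpa [Finset.sum_add_distrib] using hsum

private lemma quad_identity {n : ℕ} (A M : Matrix (Fin n) (Fin n) ℝ) (μ : ℝ) (v : Fin n → ℝ) :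
    (A.mulVec v) ⬝ᵥ M.mulVec v + v ⬝ᵥ M.mulVec (A.mulVec v) + μ * (v ⬝ᵥ M.mulVec v)
      = v ⬝ᵥ (Aᵀ * M + M * A + μ • M).mulVec v := by
  simp [Matrix.add_mulVec, dotProduct_add, ← Matrix.mulVec_mulVec,
    Matrix.dotProduct_mulVec, Matrix.vecMul_transpose, Matrix.smul_mulVec,
    dotProduct_smul, smul_eq_mul]

private lemma decay {n : ℕ} (A M : Matrix (Fin n) (Fin n) ℝ) (μ : ℝ)
    (hLMI : ∀ v : Fin n → ℝ, v ⬝ᵥ (Aᵀ * M + M * A + μ • M).mulVec v ≤ 0)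
    (a b : ℝ) {x : ℝ → Fin n → ℝ}
    (hx : ∀ t ∈ Set.Icc a b, HasDerivWithinAt x (A.mulVec (x t)) (Set.Icc a b) t)
    (r : ℝ) (hr : x a ⬝ᵥ M.mulVec (x a) ≤ r) :
    ∀ t ∈ Set.Icc a b, x t ⬝ᵥ M.mulVec (x t) ≤ r * Real.exp (-μ * (t - a)) := by
  set V : ℝ → ℝ := fun t => x t ⬝ᵥ M.mulVec (x t) with hV
  set W : ℝ → ℝ := fun t => Real.exp (μ * (t - a)) * V t with hW
  have hc : ∀ t : ℝ, HasDerivAt (fun τ => Real.exp (μ * (τ - a)))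
      (Real.exp (μ * (t - a)) * μ) t := by
    intro t
    have h1 : HasDerivAt (fun τ : ℝ => μ * (τ - a)) μ t := by
      simpa using ((hasDerivAt_id t).sub_const a).const_mul μ
    exact (Real.hasDerivAt_exp (μ * (t - a))).comp t h1
  have hWanti : AntitoneOn W (Set.Icc a b) := by
    apply antitoneOn_of_hasDerivWithinAt_nonpos (f' := fun t =>
      Real.exp (μ * (t - a)) * μ * V t +
        Real.exp (μ * (t - a)) *
          ((A.mulVec (x t)) ⬝ᵥ M.mulVec (x t) + x t ⬝ᵥ M.mulVec (A.mulVec (x t))))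
      (convex_Icc a b)
    · intro t ht
      exact ((hc t).continuousAt.continuousWithinAt.mul
        (quad_deriv M (hx t ht)).continuousWithinAt)
    · intro t ht
      rw [interior_Icc] at ht
      have hxt : HasDerivWithinAt x (A.mulVec (x t)) (Set.Ioo a b) t :=
        (hx t (Set.Ioo_subset_Icc_self ht)).mono Set.Ioo_subset_Icc_self
      rw [interior_Icc]
      exact ((hc t).hasDerivWithinAt).mul (quad_deriv M hxt)
    · intro t _
      have hk := quad_identity A M μ (x t)
      have hle := hLMI (x t)
      have hexp : 0 < Real.exp (μ * (t - a)) := Real.exp_pos _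
      nlinarith [hexp.le, mul_nonneg hexp.le (neg_nonneg.2 (hk ▸ hle))]
  intro t ht
  have hWa : W a = V a := by simp [hW]
  have h1 : W t ≤ W a := hWanti (Set.left_mem_Icc.2 (ht.1.trans ht.2)) ht ht.1
  have h2 : Real.exp (μ * (t - a)) * V t ≤ r := by
    calc Real.exp (μ * (t - a)) * V t = W t := rfl
    _ ≤ W a := h1
    _ = V a := hWa
    _ ≤ r := hr
  have hexp : 0 < Real.exp (μ * (t - a)) := Real.exp_pos _
  have : V t ≤ r / Real.exp (μ * (t - a)) := by
    rw [le_div_iff₀ hexp]; linarith [h2, mul_comm (V t) (Real.exp (μ * (t - a)))]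
  calc V t ≤ r / Real.exp (μ * (t - a)) := this
  _ = r * Real.exp (-μ * (t - a)) := by
      rw [neg_mul, Real.exp_neg, div_eq_mul_inv]



/-- Deterministic mode-switching propagation in Theorem 1: the ellipsoid bound decays in the
first mode on [0, T₀], and after the mode switch (with the ellipsoid containment condition)
it decays in the second mode on [T₀, T]. -/
theorem stmt_10 {n p : ℕ} (A₀ A₁ : Matrix (Fin n) (Fin n) ℝ)
    (B₀ B₁ : Matrix (Fin n) (Fin p) ℝ) (u : ℝ → Fin p → ℝ)
    (T₀ T : ℝ) (hT₀ : 0 < T₀) (hT : T₀ ≤ T)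
    (ξ η : ℝ → Fin n → ℝ) (hξc : Continuous ξ) (hηc : Continuous η)
    (hξ0 : ∀ t ∈ Set.Icc (0 : ℝ) T₀,
      HasDerivWithinAt ξ (A₀.mulVec (ξ t) + B₀.mulVec (u t)) (Set.Icc (0 : ℝ) T₀) t)
    (hη0 : ∀ t ∈ Set.Icc (0 : ℝ) T₀,
      HasDerivWithinAt η (A₀.mulVec (η t) + B₀.mulVec (u t)) (Set.Icc (0 : ℝ) T₀) t)
    (hξ1 : ∀ t ∈ Set.Icc T₀ T,
      HasDerivWithinAt ξ (A₁.mulVec (ξ t) + B₁.mulVec (u t)) (Set.Icc T₀ T) t)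
    (hη1 : ∀ t ∈ Set.Icc T₀ T,
      HasDerivWithinAt η (A₁.mulVec (η t) + B₁.mulVec (u t)) (Set.Icc T₀ T) t)
    (M₀ M₁ : Matrix (Fin n) (Fin n) ℝ)
    (hM₀sym : M₀ = M₀ᵀ) (hM₁sym : M₁ = M₁ᵀ)
    (hM₀pd : ∀ v : Fin n → ℝ, v ≠ 0 → 0 < v ⬝ᵥ M₀.mulVec v)
    (hM₁pd : ∀ v : Fin n → ℝ, v ≠ 0 → 0 < v ⬝ᵥ M₁.mulVec v)
    (μ₀ μ₁ : ℝ)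
    (hLMI₀ : ∀ v : Fin n → ℝ, v ⬝ᵥ (A₀ᵀ * M₀ + M₀ * A₀ + μ₀ • M₀).mulVec v ≤ 0)
    (hLMI₁ : ∀ v : Fin n → ℝ, v ⬝ᵥ (A₁ᵀ * M₁ + M₁ * A₁ + μ₁ • M₁).mulVec v ≤ 0)
    (r₀ r₁ : ℝ)
    (h0 : (ξ 0 - η 0) ⬝ᵥ M₀.mulVec (ξ 0 - η 0) ≤ r₀)
    (hcontain : ∀ v : Fin n → ℝ,
      v ⬝ᵥ M₀.mulVec v ≤ r₀ * Real.exp (-μ₀ * T₀) → v ⬝ᵥ M₁.mulVec v ≤ r₁) :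
    (∀ t ∈ Set.Icc (0 : ℝ) T₀,
      (ξ t - η t) ⬝ᵥ M₀.mulVec (ξ t - η t) ≤ r₀ * Real.exp (-μ₀ * t)) ∧
    (∀ t ∈ Set.Icc T₀ T,
      (ξ t - η t) ⬝ᵥ M₁.mulVec (ξ t - η t) ≤ r₁ * Real.exp (-μ₁ * (t - T₀))) := by
  set x : ℝ → Fin n → ℝ := fun t => ξ t - η t with hxdef
  have hx0 : ∀ t ∈ Set.Icc (0 : ℝ) T₀,
      HasDerivWithinAt x (A₀.mulVec (x t)) (Set.Icc (0 : ℝ) T₀) t := by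
    intro t ht
    have h := (hξ0 t ht).sub (hη0 t ht)
    have e : A₀.mulVec (x t) = A₀.mulVec (ξ t) + B₀.mulVec (u t) - (A₀.mulVec (η t) + B₀.mulVec (u t)) := by
      simp [hxdef, Matrix.mulVec_sub]
    rw [e]; exact h
  have hx1 : ∀ t ∈ Set.Icc T₀ T,
      HasDerivWithinAt x (A₁.mulVec (x t)) (Set.Icc T₀ T) t := by
    intro t ht
    have h := (hξ1 t ht).sub (hη1 t ht)
    have e : A₁.mulVec (x t) = A₁.mulVec (ξ t) + B₁.mulVec (u t) - (A₁.mulVec (η t) + B₁.mulVec (u t)) := by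
      simp [hxdef, Matrix.mulVec_sub]
    rw [e]; exact h
  have part1 : ∀ t ∈ Set.Icc (0 : ℝ) T₀,
      x t ⬝ᵥ M₀.mulVec (x t) ≤ r₀ * Real.exp (-μ₀ * (t - 0)) :=
    decay A₀ M₀ μ₀ hLMI₀ 0 T₀ hx0 r₀ h0
  have part1' : ∀ t ∈ Set.Icc (0 : ℝ) T₀,
      (ξ t - η t) ⬝ᵥ M₀.mulVec (ξ t - η t) ≤ r₀ * Real.exp (-μ₀ * t) := by
    intro t ht
    simpa only [sub_zero] using part1 t ht
  refine ⟨part1', ?_⟩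
  have hT₀mem : T₀ ∈ Set.Icc (0 : ℝ) T₀ := Set.right_mem_Icc.2 hT₀.le
  have hswitch : x T₀ ⬝ᵥ M₁.mulVec (x T₀) ≤ r₁ :=
    hcontain _ (by simpa only [sub_zero] using part1 T₀ hT₀mem)
  have part2 := decay A₁ M₁ μ₁ hLMI₁ T₀ T hx1 r₁ hswitch
  intro t ht
  exact part2 t ht
end
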